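/- Second-order kernel bias expansion (the U_{2N} expectation step in the proof of Theorem 1): lim_{h→0⁺} h^{−2} · ∫ K(t)·(τ(z + ht) − τ(z))·f(z + ht) dt = (∫ t²·K(t) dt) · ( τ′(z)·f′(z) + (1/2)·τ″(z)·f(z) ); equivalently, (1/h)·∫ K((u−z)/h)·(τ(u) − τ(z))·f(u) du = h²·(∫ t²K(t)dt)·( τ′(z)f′(z) + (1/2)τ″(z)f(z) ) + o(h²) as h → 0⁺. -/

import Mathlib

open MeasureTheory Filter

lemma taylor2_est {g : ℝ → ℝ} {z : ℝ} (hg : ContDiffAt ℝ 2 g z) {ε : ℝ} (hε : 0 < ε) :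
    ∃ δ > 0, ∀ s : ℝ, |s| ≤ δ →
      |g (z + s) - g z - deriv g z * s - deriv (deriv g) z / 2 * s ^ 2| ≤ ε * s ^ 2 := by
  obtain ⟨U, hU, hgU⟩ := hg.contDiffOn le_rfl (by simp)
  obtain ⟨r, hr, hball⟩ := Metric.mem_nhds_iff.mp hU
  have hgb : ContDiffOn ℝ 2 g (Metric.ball z r) := hgU.mono hball
  have hopen : IsOpen (Metric.ball z r) := Metric.isOpen_ball
  have hd1 : DifferentiableOn ℝ g (Metric.ball z r) := hgb.differentiableOn (by norm_num)
  have hder : ContDiffOn ℝ 1 (deriv g) (Metric.ball z r) :=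
    hgb.deriv_of_isOpen hopen (by norm_num)
  have hd2 : DifferentiableOn ℝ (deriv g) (Metric.ball z r) := hder.differentiableOn (by norm_num)
  have hcder : ContinuousOn (deriv (deriv g)) (Metric.ball z r) :=
    hder.continuousOn_deriv_of_isOpen hopen le_rfl
  have hcz : ContinuousAt (deriv (deriv g)) z :=
    hcder.continuousAt (hopen.mem_nhds (Metric.mem_ball_self hr))
  obtain ⟨δ₁, hδ₁, hcont⟩ := Metric.continuousAt_iff.mp hcz ε hε
  set a := deriv g z with ha
  set c := deriv (deriv g) z with hcdef
  have hδpos : (0:ℝ) < min (δ₁ / 2) (r / 2) := by positivity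
  refine ⟨min (δ₁ / 2) (r / 2), hδpos, fun s hs => ?_⟩
  set δ := min (δ₁ / 2) (r / 2) with hδ
  have hδr : δ < r := lt_of_le_of_lt (min_le_right _ _) (by linarith)
  have hδ₁' : δ < δ₁ := lt_of_le_of_lt (min_le_left _ _) (by linarith)
  have hmem : ∀ u : ℝ, |u| ≤ δ → z + u ∈ Metric.ball z r := by
    intro u hu
    rw [Metric.mem_ball, Real.dist_eq]
    simpa using lt_of_le_of_lt hu hδr
  -- ψ : the first-order remainder of `deriv g`
  set ψ : ℝ → ℝ := fun u => deriv g (z + u) - a - c * u with hψdef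
  have hψd : ∀ u ∈ Set.Icc (-δ) δ,
      HasDerivWithinAt ψ ((fun u => deriv (deriv g) (z + u) - c) u) (Set.Icc (-δ) δ) u := by
    intro u hu
    have hu' : |u| ≤ δ := abs_le.mpr ⟨by linarith [hu.1], hu.2⟩
    have h1 : HasDerivAt (deriv g) (deriv (deriv g) (z + u)) (z + u) :=
      (hd2.differentiableAt (hopen.mem_nhds (hmem u hu'))).hasDerivAt
    have h2 : HasDerivAt (fun u : ℝ => z + u) 1 u := (hasDerivAt_id u).const_add z
    have h3 : HasDerivAt (fun u : ℝ => deriv g (z + u)) (deriv (deriv g) (z + u) * 1) u :=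
      HasDerivAt.comp u h1 h2
    have h4 : HasDerivAt ψ (deriv (deriv g) (z + u) * 1 - c * 1) u :=
      (h3.sub_const a).sub ((hasDerivAt_id u).const_mul c)
    exact (h4.congr_deriv (by ring)).hasDerivWithinAt
  have hψbound : ∀ u ∈ Set.Icc (-δ) δ,
      ‖(fun u => deriv (deriv g) (z + u) - c) u‖ ≤ ε := by
    intro u hu
    have hu' : |u| ≤ δ := abs_le.mpr ⟨by linarith [hu.1], hu.2⟩
    have hd : dist (z + u) z < δ₁ := by
      rw [Real.dist_eq]; simpa using lt_of_le_of_lt hu' hδ₁'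
    exact le_of_lt (hcont hd)
  have hψ0 : ψ 0 = 0 := by simp [hψdef, ha]
  have hψ : ∀ u : ℝ, |u| ≤ δ → |ψ u| ≤ ε * |u| := by
    intro u hu
    have h0 : (0:ℝ) ∈ Set.Icc (-δ) δ := by constructor <;> simp [le_of_lt hδpos] <;> linarith
    have humem : u ∈ Set.Icc (-δ) δ := by
      rw [abs_le] at hu; exact ⟨hu.1, hu.2⟩
    have := Convex.norm_image_sub_le_of_norm_hasDerivWithin_le hψd hψbound (convex_Icc _ _)
      h0 humem
    simpa [hψ0, Real.norm_eq_abs] using this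
  -- φ : the second-order remainder of g
  set φ : ℝ → ℝ := fun u => g (z + u) - g z - a * u - c / 2 * u ^ 2 with hφdef
  have hφd : ∀ u ∈ Set.Icc (-|s|) (|s|),
      HasDerivWithinAt φ (ψ u) (Set.Icc (-|s|) (|s|)) u := by
    intro u hu
    have hu' : |u| ≤ δ := le_trans (abs_le.mpr ⟨hu.1, hu.2⟩) hs
    have h1 : HasDerivAt g (deriv g (z + u)) (z + u) :=
      (hd1.differentiableAt (hopen.mem_nhds (hmem u hu'))).hasDerivAt
    have h2 : HasDerivAt (fun u : ℝ => z + u) 1 u := (hasDerivAt_id u).const_add z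
    have h3 : HasDerivAt (fun u : ℝ => g (z + u)) (deriv g (z + u) * 1) u :=
      HasDerivAt.comp u h1 h2
    have h4 : HasDerivAt (fun u : ℝ => a * u) (a * 1) u := (hasDerivAt_id u).const_mul a
    have h5 : HasDerivAt (fun u : ℝ => c / 2 * u ^ 2) (c / 2 * (2 * u ^ 1)) u := by
      simpa using ((hasDerivAt_pow 2 u).const_mul (c / 2))
    have h6 : HasDerivAt φ (deriv g (z + u) * 1 - a * 1 - c / 2 * (2 * u ^ 1)) u :=
      ((h3.sub_const (g z)).sub h4).sub h5
    exact (h6.congr_deriv (by simp [hψdef]; ring)).hasDerivWithinAt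
  have hφbound : ∀ u ∈ Set.Icc (-|s|) (|s|), ‖ψ u‖ ≤ ε * |s| := by
    intro u hu
    have hu2 : |u| ≤ |s| := abs_le.mpr ⟨hu.1, hu.2⟩
    have hu' : |u| ≤ δ := le_trans hu2 hs
    calc ‖ψ u‖ = |ψ u| := rfl
      _ ≤ ε * |u| := hψ u hu'
      _ ≤ ε * |s| := by nlinarith [abs_nonneg u]
  have h0 : (0:ℝ) ∈ Set.Icc (-|s|) (|s|) := by
    constructor <;> simp [abs_nonneg s]
  have hsmem : s ∈ Set.Icc (-|s|) (|s|) := ⟨neg_abs_le s, le_abs_self s⟩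
  have key := Convex.norm_image_sub_le_of_norm_hasDerivWithin_le hφd hφbound (convex_Icc _ _)
    h0 hsmem
  have hφ0 : φ 0 = 0 := by simp [hφdef]
  have : |φ s| ≤ ε * |s| * |s| := by simpa [hφ0, Real.norm_eq_abs] using key
  calc |g (z + s) - g z - a * s - c / 2 * s ^ 2| = |φ s| := rfl
    _ ≤ ε * |s| * |s| := this
    _ = ε * s ^ 2 := by rw [mul_assoc, ← abs_mul, abs_mul_self]; ring
set_option maxHeartbeats 1600000 in
/-- Second-order kernel bias expansion:
`lim_{h→0⁺} h⁻² ∫ K(t)(τ(z + ht) − τ(z)) f(z + ht) dt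
  = (∫ t² K(t) dt) (τ′(z) f′(z) + (1/2) τ″(z) f(z))`,
for a bounded, compactly supported kernel `K` with `∫K = 1` and `∫ tK(t) dt = 0`, and `τ`,
`f` twice continuously differentiable in a neighborhood of `z`, with `f` bounded. -/
theorem second_order_kernel_bias_expansion
    (K τ f : ℝ → ℝ) (z : ℝ)
    (hKm : Measurable K) (hKb : ∃ C, ∀ t, |K t| ≤ C) (hKsupp : HasCompactSupport K)
    (hK1 : ∫ t, K t = 1) (hK0 : ∫ t, t * K t = 0)
    (hτ : ContDiffAt ℝ 2 τ z) (hf : ContDiffAt ℝ 2 f z)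
    (hfb : ∃ C, ∀ x, |f x| ≤ C) :
    Tendsto (fun h : ℝ => h⁻¹ ^ 2 * ∫ t, K t * (τ (z + h * t) - τ z) * f (z + h * t))
      (nhdsWithin 0 (Set.Ioi 0))
      (nhds ((∫ t, t ^ 2 * K t)
        * (deriv τ z * deriv f z + (1 / 2) * deriv (deriv τ) z * f z))) := by
  obtain ⟨CK, hCK⟩ := hKb
  have hCK0 : 0 ≤ CK := le_trans (abs_nonneg _) (hCK 0)
  obtain ⟨M₀, hM₀⟩ := hKsupp.isCompact.isBounded.subset_closedBall 0
  set M := max M₀ 1 with hMdef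
  have hM1 : (1:ℝ) ≤ M := le_max_right _ _
  have hM0 : (0:ℝ) < M := lt_of_lt_of_le one_pos hM1
  have hMs : tsupport K ⊆ Set.Icc (-M) M := by
    intro x hx
    have h1 := hM₀ hx
    rw [Metric.mem_closedBall, Real.dist_eq, sub_zero] at h1
    exact abs_le.mp (le_trans h1 (le_max_left _ _))
  have hKzero : ∀ t : ℝ, t ∉ Set.Icc (-M) M → K t = 0 := fun t ht =>
    image_eq_zero_of_notMem_tsupport (fun hc => ht (hMs hc))
  -- integrability of `c * K'` for continuous `c` and kernels dominated by `K`
  have key : ∀ K' : ℝ → ℝ, Measurable K' → (∀ t, |K' t| ≤ |K t|) →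
      ∀ c : ℝ → ℝ, Continuous c → Integrable (fun t => c t * K' t) := by
    intro K' hK'm hK'le c hc
    have hsupp : Function.support (fun t => c t * K' t) ⊆ Set.Icc (-M) M := by
      intro t ht
      by_contra hmem
      have hK0' : K t = 0 := hKzero t hmem
      have hK'0 : K' t = 0 :=
        abs_eq_zero.mp (le_antisymm (by simpa [hK0'] using hK'le t) (abs_nonneg _))
      exact ht (by simp [hK'0])
    rw [← integrableOn_iff_integrable_of_support_subset hsupp]
    obtain ⟨B, hB⟩ :=
      (isCompact_Icc (a := -M) (b := M)).exists_bound_of_continuousOn hc.continuousOn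
    refine Measure.integrableOn_of_bounded (measure_Icc_lt_top.ne)
      ((hc.measurable.mul hK'm).aestronglyMeasurable) (M := B * CK) ?_
    filter_upwards [ae_restrict_mem measurableSet_Icc] with t ht
    have hBt : |c t| ≤ B := by simpa [Real.norm_eq_abs] using hB t ht
    calc ‖c t * K' t‖ = |c t| * |K' t| := by rw [Real.norm_eq_abs, abs_mul]
      _ ≤ B * CK :=
        mul_le_mul hBt (le_trans (hK'le t) (hCK t)) (abs_nonneg _)
          (le_trans (abs_nonneg _) hBt)
  have intK1 : Integrable (fun t => t * K t) := key K hKm (fun t => le_rfl) _ continuous_id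
  have intK2 : Integrable (fun t => t ^ 2 * K t) :=
    key K hKm (fun t => le_rfl) _ (continuous_pow 2)
  have intKa2 : Integrable (fun t => t ^ 2 * |K t|) :=
    key (fun t => |K t|) hKm.abs (by simp) _ (continuous_pow 2)
  -- the product function g and its derivatives at z
  set g : ℝ → ℝ := fun u => (τ u - τ z) * f u with hgdef
  have hg : ContDiffAt ℝ 2 g z := (hτ.sub contDiffAt_const).mul hf
  have hgz : g z = 0 := by simp [hgdef]
  obtain ⟨U₁, hU₁, hτU⟩ := hτ.contDiffOn le_rfl (by simp)
  obtain ⟨U₂, hU₂, hfU⟩ := hf.contDiffOn le_rfl (by simp)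
  obtain ⟨r, hr, hball⟩ := Metric.mem_nhds_iff.mp (inter_mem hU₁ hU₂)
  have hopen : IsOpen (Metric.ball z r) := Metric.isOpen_ball
  have hτb : ContDiffOn ℝ 2 τ (Metric.ball z r) := hτU.mono (fun x hx => (hball hx).1)
  have hfb2 : ContDiffOn ℝ 2 f (Metric.ball z r) := hfU.mono (fun x hx => (hball hx).2)
  have hτd : DifferentiableOn ℝ τ (Metric.ball z r) := hτb.differentiableOn (by norm_num)
  have hfd : DifferentiableOn ℝ f (Metric.ball z r) := hfb2.differentiableOn (by norm_num)
  have hτd1 : DifferentiableOn ℝ (deriv τ) (Metric.ball z r) :=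
    (hτb.deriv_of_isOpen hopen (m := 1) (by norm_num)).differentiableOn (by norm_num)
  have hfd1 : DifferentiableOn ℝ (deriv f) (Metric.ball z r) :=
    (hfb2.deriv_of_isOpen hopen (m := 1) (by norm_num)).differentiableOn (by norm_num)
  have hzball : z ∈ Metric.ball z r := Metric.mem_ball_self hr
  have hgderiv : ∀ u ∈ Metric.ball z r,
      HasDerivAt g (deriv τ u * f u + (τ u - τ z) * deriv f u) u := by
    intro u hu
    exact ((hτd.differentiableAt (hopen.mem_nhds hu)).hasDerivAt.sub_const (τ z)).mul
      (hfd.differentiableAt (hopen.mem_nhds hu)).hasDerivAt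
  have hgd_eq : deriv g =ᶠ[nhds z] fun u => deriv τ u * f u + (τ u - τ z) * deriv f u := by
    filter_upwards [hopen.mem_nhds hzball] with u hu
    exact (hgderiv u hu).deriv
  have hG : HasDerivAt (fun u => deriv τ u * f u + (τ u - τ z) * deriv f u)
      (deriv (deriv τ) z * f z + deriv τ z * deriv f z +
        (deriv τ z * deriv f z + (τ z - τ z) * deriv (deriv f) z)) z := by
    have h1 : HasDerivAt (deriv τ) (deriv (deriv τ) z) z :=
      (hτd1.differentiableAt (hopen.mem_nhds hzball)).hasDerivAt
    have h2 : HasDerivAt f (deriv f z) z :=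
      (hfd.differentiableAt (hopen.mem_nhds hzball)).hasDerivAt
    have h3 : HasDerivAt τ (deriv τ z) z :=
      (hτd.differentiableAt (hopen.mem_nhds hzball)).hasDerivAt
    have h4 : HasDerivAt (deriv f) (deriv (deriv f) z) z :=
      (hfd1.differentiableAt (hopen.mem_nhds hzball)).hasDerivAt
    exact (h1.mul h2).add ((h3.sub_const (τ z)).mul h4)
  have hsecond : deriv (deriv g) z
      = deriv (deriv τ) z * f z + 2 * (deriv τ z * deriv f z) := by
    rw [hgd_eq.deriv_eq, hG.deriv]; ring
  -- the limit
  rw [Metric.tendsto_nhdsWithin_nhds]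
  intro ε hε
  set C₂ := ∫ t, t ^ 2 * |K t| with hC₂def
  have hC₂0 : 0 ≤ C₂ := integral_nonneg fun t => by positivity
  have hε' : 0 < ε / (C₂ + 1) := by positivity
  obtain ⟨δ₀, hδ₀, hT⟩ := taylor2_est hg hε'
  refine ⟨min δ₀ (r / 2) / M, div_pos (lt_min hδ₀ (by linarith)) hM0, ?_⟩
  intro h hh hdist
  rw [Real.dist_eq, sub_zero] at hdist
  have hhpos : 0 < h := hh
  have habs : |h| = h := abs_of_pos hhpos
  rw [habs] at hdist
  have hhM : h * M < min δ₀ (r / 2) := by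
    calc h * M < min δ₀ (r / 2) / M * M := mul_lt_mul_of_pos_right hdist hM0
      _ = min δ₀ (r / 2) := by field_simp
  have hsmall : ∀ t ∈ Set.Icc (-M) M, |h * t| ≤ min δ₀ (r / 2) := by
    intro t ht
    have htM : |t| ≤ M := abs_le.mpr ⟨ht.1, ht.2⟩
    calc |h * t| = h * |t| := by rw [abs_mul, habs]
      _ ≤ h * M := by nlinarith
      _ ≤ min δ₀ (r / 2) := le_of_lt hhM
  set E : ℝ → ℝ := fun t =>
    g (z + h * t) - g z - deriv g z * (h * t) - deriv (deriv g) z / 2 * (h * t) ^ 2 with hEdef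
  have hEbound : ∀ t ∈ Set.Icc (-M) M, |E t| ≤ ε / (C₂ + 1) * (h * t) ^ 2 :=
    fun t ht => hT (h * t) (le_trans (hsmall t ht) (min_le_left _ _))
  have hEcont : ContinuousOn E (Set.Icc (-M) M) := by
    have hmaps : Set.MapsTo (fun t => z + h * t) (Set.Icc (-M) M) (Metric.ball z r) := by
      intro t ht
      rw [Metric.mem_ball, Real.dist_eq]
      simp only [add_sub_cancel_left]
      exact lt_of_le_of_lt (le_trans (hsmall t ht) (min_le_right _ _)) (by linarith)
    have hgc : ContinuousOn g (Metric.ball z r) :=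
      (hτb.continuousOn.sub continuousOn_const).mul hfb2.continuousOn
    have comp : ContinuousOn (fun t => g (z + h * t)) (Set.Icc (-M) M) :=
      hgc.comp ((continuous_const.add (continuous_const.mul continuous_id)).continuousOn) hmaps
    have c1 : Continuous fun t : ℝ => deriv g z * (h * t) :=
      continuous_const.mul (continuous_const.mul continuous_id)
    have c2 : Continuous fun t : ℝ => deriv (deriv g) z / 2 * (h * t) ^ 2 :=
      continuous_const.mul ((continuous_const.mul continuous_id).pow 2)
    exact ((comp.sub continuousOn_const).sub c1.continuousOn).sub c2.continuousOn
  have hKE : Integrable (fun t => K t * E t) := by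
    have hsupp : Function.support (fun t => K t * E t) ⊆ Set.Icc (-M) M := by
      intro t ht
      by_contra hmem
      exact ht (by simp [hKzero t hmem])
    rw [← integrableOn_iff_integrable_of_support_subset hsupp]
    refine ⟨hKm.aestronglyMeasurable.restrict.mul
      (hEcont.aestronglyMeasurable measurableSet_Icc), ?_⟩
    apply HasFiniteIntegral.restrict_of_bounded
      (C := CK * (ε / (C₂ + 1) * (h * M) ^ 2)) measure_Icc_lt_top
    filter_upwards [ae_restrict_mem measurableSet_Icc] with t ht
    have h1 := hEbound t ht
    have h2 : (h * t) ^ 2 ≤ (h * M) ^ 2 := by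
      have htM : |t| ≤ M := abs_le.mpr ⟨ht.1, ht.2⟩
      have h3 := sq_le_sq' (abs_le.mp htM).1 (abs_le.mp htM).2
      nlinarith [sq_nonneg h]
    calc ‖K t * E t‖ = |K t| * |E t| := by rw [Real.norm_eq_abs, abs_mul]
      _ ≤ CK * (ε / (C₂ + 1) * (h * M) ^ 2) :=
        mul_le_mul (hCK t)
          (le_trans h1 (mul_le_mul_of_nonneg_left h2 (le_of_lt hε'))) (abs_nonneg _) hCK0
  have hfun : (fun t => K t * (τ (z + h * t) - τ z) * f (z + h * t)) =
      fun t => deriv g z * h * (t * K t)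
        + deriv (deriv g) z / 2 * h ^ 2 * (t ^ 2 * K t) + K t * E t := by
    funext t
    simp only [hEdef, hgdef]
    ring
  have hI : (∫ t, K t * (τ (z + h * t) - τ z) * f (z + h * t)) =
      deriv g z * h * (∫ t, t * K t)
        + deriv (deriv g) z / 2 * h ^ 2 * (∫ t, t ^ 2 * K t) + ∫ t, K t * E t := by
    have hIa : Integrable (fun t => deriv g z * h * (t * K t)) volume :=
      intK1.const_mul _
    have hIb : Integrable (fun t => deriv (deriv g) z / 2 * h ^ 2 * (t ^ 2 * K t)) volume :=
      intK2.const_mul _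
    have hIab : Integrable (fun t => deriv g z * h * (t * K t)
        + deriv (deriv g) z / 2 * h ^ 2 * (t ^ 2 * K t)) volume := hIa.add hIb
    rw [hfun, integral_add hIab hKE, integral_add hIa hIb,
      integral_const_mul, integral_const_mul]
  rw [hK0, mul_zero] at hI
  have hR : |∫ t, K t * E t| ≤ ε / (C₂ + 1) * h ^ 2 * C₂ := by
    calc |∫ t, K t * E t| ≤ ∫ t, ‖K t * E t‖ := by
          simpa [Real.norm_eq_abs] using norm_integral_le_integral_norm (fun t => K t * E t)
      _ ≤ ∫ t, ε / (C₂ + 1) * h ^ 2 * (t ^ 2 * |K t|) := by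
          apply integral_mono_of_nonneg (Eventually.of_forall fun t => norm_nonneg _)
            (intKa2.const_mul _)
          apply Eventually.of_forall
          intro t
          by_cases ht : t ∈ Set.Icc (-M) M
          · have h1 := hEbound t ht
            calc ‖K t * E t‖ = |K t| * |E t| := by rw [Real.norm_eq_abs, abs_mul]
              _ ≤ |K t| * (ε / (C₂ + 1) * (h * t) ^ 2) :=
                mul_le_mul_of_nonneg_left h1 (abs_nonneg _)
              _ = ε / (C₂ + 1) * h ^ 2 * (t ^ 2 * |K t|) := by ring
          · simp only [hKzero t ht]
            have : (0:ℝ) ≤ ε / (C₂ + 1) * h ^ 2 * (t ^ 2 * |0|) := by positivity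
            simpa using this
      _ = ε / (C₂ + 1) * h ^ 2 * C₂ := integral_const_mul _ _
  rw [Real.dist_eq, hI]
  have hLc : (∫ t, t ^ 2 * K t) * (deriv τ z * deriv f z + 1 / 2 * deriv (deriv τ) z * f z)
      = (∫ t, t ^ 2 * K t) * (deriv (deriv g) z / 2) := by rw [hsecond]; ring
  rw [hLc]
  have hne : h ≠ 0 := ne_of_gt hhpos
  have hsplit : h⁻¹ ^ 2 * (0 + deriv (deriv g) z / 2 * h ^ 2 * (∫ t, t ^ 2 * K t)
        + ∫ t, K t * E t) - (∫ t, t ^ 2 * K t) * (deriv (deriv g) z / 2)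
      = h⁻¹ ^ 2 * ∫ t, K t * E t := by
    field_simp
    ring
  rw [hsplit]
  calc |h⁻¹ ^ 2 * ∫ t, K t * E t| = h⁻¹ ^ 2 * |∫ t, K t * E t| := by
        rw [abs_mul, abs_of_nonneg (by positivity)]
    _ ≤ h⁻¹ ^ 2 * (ε / (C₂ + 1) * h ^ 2 * C₂) := mul_le_mul_of_nonneg_left hR (by positivity)
    _ = ε / (C₂ + 1) * C₂ := by field_simp
    _ < ε := by
      rw [div_mul_eq_mul_div, div_lt_iff₀ (by positivity)]
      nlinarith
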